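/- arXiv:2106.12725 — 2 statements merged into one kernel-verified Lean document; each statement's English description precedes it below -/
import Mathlib

section
/- For every j ∈ R with j−1 ∈ R (i.e., j ∈ R ∖ R′), it holds: L-root(j−1) = L-root(j), rend(j−1) = rend(j), L-tail(j−1) = L-tail(j), rendfull(j−1) = rendfull(j), and type(j−1) = type(j). -/
open scoped Classical

namespace CSA

/-- Character of a 1-indexed string at position `i` (junk value 0 out of range). -/
def idx (S : List ℕ) (i : ℕ) : ℕ := S.getD (i - 1) 0

/-- Substring `S[i..j)` in the 1-indexed, half-open convention. -/
def sub (S : List ℕ) (i j : ℕ) : List ℕ := (S.drop (i - 1)).take (j - i)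

/-- Suffix `S[i..|S|]` (1-indexed). -/
def suf (S : List ℕ) (i : ℕ) : List ℕ := S.drop (i - 1)

/-- Length of the longest common prefix of two strings. -/
def lcp (A B : List ℕ) : ℕ := ((A.zip B).takeWhile fun p => p.1 == p.2).length

/-- `LCE T j₁ j₂` is the length of the longest common prefix of `T[j₁..n]` and `T[j₂..n]`. -/
def LCE (T : List ℕ) (j₁ j₂ : ℕ) : ℕ := lcp (suf T j₁) (suf T j₂)

/-- `p` is a period of `S`. -/
def IsPeriod (S : List ℕ) (p : ℕ) : Prop :=
  1 ≤ p ∧ p ≤ S.length ∧ ∀ i, i + p < S.length → S.getD i 0 = S.getD (i + p) 0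

/-- The shortest period of `S`. -/
noncomputable def per (S : List ℕ) : ℕ := sInf {p | IsPeriod S p}

/-- `R = {i ∈ [1..n−3τ+2] : per(T[i..i+3τ−1)) ≤ τ/3}`. -/
noncomputable def R (T : List ℕ) (τ : ℕ) : Set ℕ :=
  {i | 1 ≤ i ∧ i + 3 * τ ≤ T.length + 2 ∧ 3 * per (sub T i (i + 3 * τ - 1)) ≤ τ}

/-- `rend(j) = min{j′ ≥ j : j′ ∉ R} + 3τ − 2`. -/
noncomputable def rend (T : List ℕ) (τ j : ℕ) : ℕ :=
  sInf {j' | j ≤ j' ∧ j' ∉ R T τ} + 3 * τ - 2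

/-- `L-root(j)`: lexicographically smallest among `{T[j+t..j+t+p) : 0 ≤ t < p}`
where `p = per(T[j..j+3τ−1))`. -/
noncomputable def Lroot (T : List ℕ) (τ j : ℕ) : List ℕ :=
  (((Finset.range (per (sub T j (j + 3 * τ - 1)))).image fun t =>
      sub T (j + t) (j + t + per (sub T j (j + 3 * τ - 1)))).min).untopD []

/-- `L-head(j)`: the (unique) `s ∈ [0..p)` with `T[j+s..j+s+p) = L-root(j)`. -/
noncomputable def Lhead (T : List ℕ) (τ j : ℕ) : ℕ :=
  sInf {s | s < per (sub T j (j + 3 * τ - 1)) ∧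
    sub T (j + s) (j + s + per (sub T j (j + 3 * τ - 1))) = Lroot T τ j}

noncomputable def Lexp (T : List ℕ) (τ j : ℕ) : ℕ :=
  (rend T τ j - j - Lhead T τ j) / per (sub T j (j + 3 * τ - 1))

noncomputable def Ltail (T : List ℕ) (τ j : ℕ) : ℕ :=
  (rend T τ j - j - Lhead T τ j) % per (sub T j (j + 3 * τ - 1))

noncomputable def rendfull (T : List ℕ) (τ j : ℕ) : ℕ := rend T τ j - Ltail T τ j

/-- `type(j) = +1` if `rend(j) ≤ n` and `T[rend(j)] > T[rend(j)−p]`, and `−1` otherwise. -/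
noncomputable def typ (T : List ℕ) (τ j : ℕ) : ℤ :=
  if rend T τ j ≤ T.length ∧
      idx T (rend T τ j - per (sub T j (j + 3 * τ - 1))) < idx T (rend T τ j)
    then 1 else -1

noncomputable def Rminus (T : List ℕ) (τ : ℕ) : Set ℕ := {j ∈ R T τ | typ T τ j = -1}

noncomputable def RH (T : List ℕ) (τ : ℕ) (H : List ℕ) : Set ℕ :=
  {j ∈ R T τ | Lroot T τ j = H}

noncomputable def RsH (T : List ℕ) (τ s : ℕ) (H : List ℕ) : Set ℕ :=
  {j ∈ R T τ | Lroot T τ j = H ∧ Lhead T τ j = s}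

noncomputable def RminusH (T : List ℕ) (τ : ℕ) (H : List ℕ) : Set ℕ :=
  Rminus T τ ∩ RH T τ H

noncomputable def RminusSH (T : List ℕ) (τ s : ℕ) (H : List ℕ) : Set ℕ :=
  Rminus T τ ∩ RsH T τ s H

noncomputable def Rprime (T : List ℕ) (τ : ℕ) : Set ℕ := {j ∈ R T τ | j - 1 ∉ R T τ}

/-- `Occ(P,S)`: the set of (1-indexed) starting positions of occurrences of `P` in `S`. -/
def OccSet (P S : List ℕ) : Set ℕ :=
  {j | 1 ≤ j ∧ j + P.length ≤ S.length + 1 ∧ sub S j (j + P.length) = P}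

noncomputable def RangeBeg (P T : List ℕ) : ℕ :=
  Set.ncard {i | 1 ≤ i ∧ i ≤ T.length ∧ suf T i < P}

noncomputable def RangeEnd (P T : List ℕ) : ℕ := RangeBeg P T + (OccSet P T).ncard

/-- `ISA[j]`: the lexicographic rank of the suffix `T[j..n]` among all suffixes of `T`. -/
noncomputable def ISA (T : List ℕ) (j : ℕ) : ℕ :=
  Set.ncard {j' | 1 ≤ j' ∧ j' ≤ T.length ∧ suf T j' ≤ suf T j}

/-- `succ_S(i) = min{j ∈ S ∪ {n−2τ+2} : j ≥ i}`. -/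
noncomputable def succS (T : List ℕ) (τ : ℕ) (Sync : Set ℕ) (i : ℕ) : ℕ :=
  sInf {j | i ≤ j ∧ (j ∈ Sync ∨ j = T.length + 2 - 2 * τ)}

/-- The set `D` of distinguishing prefixes. -/
noncomputable def Dset (T : List ℕ) (τ : ℕ) (Sync : Set ℕ) : Set (List ℕ) :=
  {X | ∃ i, 1 ≤ i ∧ i + 3 * τ ≤ T.length + 2 ∧ i ∉ R T τ ∧
    X = sub T i (succS T τ Sync i + 2 * τ)}

/-- `T^∞[i] = T[1 + ((i−1) mod n)]` for `i : ℤ`. -/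
def tinf (T : List ℕ) (i : ℤ) : ℕ := idx T (((i - 1).emod (T.length : ℤ)).toNat + 1)

/-- `W[i]`: the reverse of `T^∞[s^lex_i − τ .. s^lex_i + 2τ)`. -/
def Wstr (T : List ℕ) (τ : ℕ) (slex : ℕ → ℕ) (i : ℕ) : List ℕ :=
  ((List.range (3 * τ)).map fun k => tinf T ((slex i : ℤ) - (τ : ℤ) + (k : ℤ))).reverse

/- Pattern versions of the `L`-decomposition functions. -/

noncomputable def perP (τ : ℕ) (P : List ℕ) : ℕ := per (P.take (3 * τ - 1))

/-- A pattern is periodic if `|P| ≥ 3τ−1` and `per(P[1..3τ−1]) ≤ τ/3`. -/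
noncomputable def Periodic (τ : ℕ) (P : List ℕ) : Prop :=
  3 * τ - 1 ≤ P.length ∧ 3 * perP τ P ≤ τ

noncomputable def pend (τ : ℕ) (P : List ℕ) : ℕ :=
  1 + perP τ P + lcp P (P.drop (perP τ P))

noncomputable def LrootP (τ : ℕ) (P : List ℕ) : List ℕ :=
  (((Finset.range (perP τ P)).image fun t => (P.drop t).take (perP τ P)).min).untopD []

noncomputable def LheadP (τ : ℕ) (P : List ℕ) : ℕ :=
  sInf {s | s < perP τ P ∧ (P.drop s).take (perP τ P) = LrootP τ P}

noncomputable def LexpP (τ : ℕ) (P : List ℕ) : ℕ :=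
  (pend τ P - 1 - LheadP τ P) / perP τ P

noncomputable def LtailP (τ : ℕ) (P : List ℕ) : ℕ :=
  (pend τ P - 1 - LheadP τ P) % perP τ P

noncomputable def pendfullP (τ : ℕ) (P : List ℕ) : ℕ := pend τ P - LtailP τ P

noncomputable def typP (τ : ℕ) (P : List ℕ) : ℤ :=
  if pend τ P ≤ P.length ∧ idx P (pend τ P - perP τ P) < idx P (pend τ P)
    then 1 else -1

/-- `pow(H)`: the prefix of length `|H|·⌈τ/|H|⌉` of `H^∞`. -/
def powS (τ : ℕ) (H : List ℕ) : List ℕ :=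
  (List.replicate ((τ + H.length - 1) / H.length) H).flatten

lemma getD_map_range {L : ℕ} {f : ℕ → ℕ} {k : ℕ} (hk : k < L) :
    ((List.range L).map f).getD k 0 = f k := by
  rw [List.getD_eq_getElem _ _ (by simpa using hk)]
  simp

lemma map_range_eq_iff {L : ℕ} {f f' : ℕ → ℕ} :
    (List.range L).map f = (List.range L).map f' ↔ ∀ k < L, f k = f' k := by
  constructor
  · intro e k hk
    have h1 : ((List.range L).map f).getD k 0 = ((List.range L).map f').getD k 0 := by rw [e]
    rwa [getD_map_range hk, getD_map_range hk] at h1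
  · intro hfe
    apply List.map_congr_left
    intro k hk
    exact hfe k (List.mem_range.mp hk)

lemma sub_eq_map (T : List ℕ) (x L : ℕ) (hx : 1 ≤ x) (hL : x + L ≤ T.length + 1) :
    sub T x (x + L) = (List.range L).map fun k => T.getD (x - 1 + k) 0 := by
  unfold sub
  rw [Nat.add_sub_cancel_left]
  apply List.ext_getElem
  · simp; omega
  · intro i h1 h2
    simp only [List.getElem_take, List.getElem_drop, List.getElem_map, List.getElem_range]
    rw [List.getD_eq_getElem _ _ (by simp at h1 ⊢; omega)]

lemma isPeriod_map_range_iff {L p : ℕ} {f : ℕ → ℕ} :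
    IsPeriod ((List.range L).map f) p ↔
      1 ≤ p ∧ p ≤ L ∧ ∀ i, i + p < L → f i = f (i + p) := by
  unfold IsPeriod
  simp only [List.length_map, List.length_range]
  constructor
  · rintro ⟨h1, h2, h3⟩
    exact ⟨h1, h2, fun i hi => by
      have := h3 i hi
      rwa [getD_map_range (by omega), getD_map_range hi] at this⟩
  · rintro ⟨h1, h2, h3⟩
    exact ⟨h1, h2, fun i hi => by
      rw [getD_map_range (by omega), getD_map_range hi]; exact h3 i hi⟩

lemma isPeriod_length {S : List ℕ} (h : 1 ≤ S.length) : IsPeriod S S.length :=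
  ⟨h, le_rfl, fun i hi => absurd hi (by omega)⟩

lemma per_isPeriod {S : List ℕ} (h : 1 ≤ S.length) : IsPeriod S (per S) := by
  have h2 : {p | IsPeriod S p}.Nonempty := ⟨S.length, by exact isPeriod_length h⟩
  exact Nat.sInf_mem h2

lemma per_le {S : List ℕ} {p : ℕ} (h : IsPeriod S p) : per S ≤ p := Nat.sInf_le (by exact h)

lemma period_diff {h : ℕ → ℕ} {L p q : ℕ} (hpq : p ≤ q) (hL : p + q ≤ L)
    (hp : ∀ i, i + p < L → h i = h (i + p)) (hq : ∀ i, i + q < L → h i = h (i + q)) :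
    ∀ i, i + (q - p) < L → h i = h (i + (q - p)) := by
  intro i hi
  rcases lt_or_ge (i + q) L with hc | hc
  · have e1 := hq i hc
    have e2 := hp (i + (q - p)) (by omega)
    rw [show i + (q - p) + p = i + q by omega] at e2
    exact e1.trans e2.symm
  · have e1 := hp (i - p) (by omega)
    have e2 := hq (i - p) (by omega)
    rw [show i - p + p = i by omega] at e1
    rw [show i - p + q = i + (q - p) by omega] at e2
    exact e1.symm.trans e2

lemma period_gcd {L : ℕ} (hfun : ℕ → ℕ) :
    ∀ N p q, p + q ≤ N → 1 ≤ p → 1 ≤ q → p + q ≤ L →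
      (∀ i, i + p < L → hfun i = hfun (i + p)) →
      (∀ i, i + q < L → hfun i = hfun (i + q)) →
      ∀ i, i + Nat.gcd p q < L → hfun i = hfun (i + Nat.gcd p q) := by
  intro N
  induction N with
  | zero => intro p q hN hp1; omega
  | succ N ih =>
    intro p q hN hp1 hq1 hL hp hq
    rcases lt_trichotomy p q with hlt | heq | hgt
    · have hd := period_diff (le_of_lt hlt) hL hp hq
      have := ih p (q - p) (by omega) hp1 (by omega) (by omega) hp hd
      rwa [Nat.gcd_sub_self_right (le_of_lt hlt)] at this
    · subst heq
      simpa [Nat.gcd_self] using hp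
    · have hd := period_diff (le_of_lt hgt) (by omega) hq hp
      have := ih (p - q) q (by omega) (by omega) hq1 (by omega) hd hq
      rwa [Nat.gcd_sub_self_left (le_of_lt hgt)] at this

lemma occ_far {h : ℕ → ℕ} {m p a d : ℕ}
    (hp1 : 1 ≤ p) (hd1 : 1 ≤ d) (hdp : d < p) (h3p : 3 * p ≤ m)
    (hper : ∀ i, i + p < m + 1 → h i = h (i + p))
    (had : a + d ≤ p)
    (hocc : ∀ k, k < p → h (a + k) = h (a + d + k)) :
    ∀ i, i + Nat.gcd d p < m → h i = h (i + Nat.gcd d p) := by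
  have hg1 : 1 ≤ Nat.gcd d p := Nat.gcd_pos_of_pos_left _ hd1
  have hgd : Nat.gcd d p ≤ d := Nat.gcd_le_left _ hd1
  have hmid : ∀ k, k + Nat.gcd d p < p + d → h (a + k) = h (a + k + Nat.gcd d p) := by
    have key := period_gcd (L := p + d) (fun k => h (a + k)) (d + p) d p le_rfl hd1 hp1 (by omega)
      (fun i hi => by
        have e := hocc i (by omega)
        show h (a + i) = h (a + (i + d))
        rwa [show a + (i + d) = a + d + i by omega])
      (fun i hi => by
        have e := hper (a + i) (by omega)
        show h (a + i) = h (a + (i + p))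
        rwa [show a + (i + p) = a + i + p by omega])
    intro k hk
    have h2 : h (a + k) = h (a + (k + Nat.gcd d p)) := key k hk
    rwa [show a + (k + Nat.gcd d p) = a + k + Nat.gcd d p by omega] at h2
  intro i
  induction i using Nat.strong_induction_on with
  | _ i ih =>
    intro hi
    rcases lt_or_ge i a with hlow | h1
    · have e1 := hper i (by omega)
      have e2 := hper (i + Nat.gcd d p) (by omega)
      have e3 := hmid (i + p - a) (by omega)
      rw [show a + (i + p - a) = i + p by omega] at e3
      rw [show i + Nat.gcd d p + p = i + p + Nat.gcd d p by omega] at e2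
      exact (e1.trans e3).trans e2.symm
    · rcases lt_or_ge i (a + p) with hmid2 | hhigh
      · have e := hmid (i - a) (by omega)
        rwa [show a + (i - a) = i by omega] at e
      · have e1 := hper (i - p) (by omega)
        have e2 := hper (i - p + Nat.gcd d p) (by omega)
        have e3 := ih (i - p) (by omega) (by omega)
        rw [show i - p + p = i by omega] at e1
        rw [show i - p + Nat.gcd d p + p = i + Nat.gcd d p by omega] at e2
        rw [← e1, ← e2]
        exact e3

/-- Lemma: positions in the same run share their L-decomposition data. -/
theorem statement_2
    (σ n τ : ℕ) (T : List ℕ)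
    (hσ : 2 ≤ σ) (hn : 2 ≤ n) (hτ : 1 ≤ τ)
    (hlen : T.length = n) (halph : ∀ c ∈ T, c < σ)
    (hlast : idx T n = 0) (huniq : ∀ i, 1 ≤ i → i < n → idx T i ≠ 0)
    (j : ℕ) (hj : j ∈ R T τ) (hj' : j - 1 ∈ R T τ) :
    Lroot T τ (j - 1) = Lroot T τ j ∧
    rend T τ (j - 1) = rend T τ j ∧
    Ltail T τ (j - 1) = Ltail T τ j ∧
    rendfull T τ (j - 1) = rendfull T τ j ∧
    typ T τ (j - 1) = typ T τ j := by

  classical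
  have hjR := hj
  have hjR' := hj'
  simp only [R, Set.mem_setOf_eq] at hj hj'
  obtain ⟨hj1, hjn, hjperB⟩ := hj
  obtain ⟨hj1', hjn', hjperA⟩ := hj'
  have hj2 : 2 ≤ j := by omega
  obtain ⟨J, rfl⟩ : ∃ J, j = J + 2 := ⟨j - 2, by omega⟩
  have hred : J + 2 - 1 = J + 1 := rfl
  rw [hred] at hjR' hj1' hjn' hjperA ⊢
  set pA := per (sub T (J + 1) (J + 1 + 3 * τ - 1)) with hpAdef
  set pB := per (sub T (J + 2) (J + 2 + 3 * τ - 1)) with hpBdef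
  have hlen3 : J + 3 * τ ≤ T.length := by omega
  have hEA : sub T (J + 1) (J + 1 + 3 * τ - 1)
      = (List.range (3 * τ - 1)).map (fun k => T.getD (J + k) 0) := by
    have h1 := sub_eq_map T (J + 1) (3 * τ - 1) (by omega) (by omega)
    rw [show J + 1 + (3 * τ - 1) = J + 1 + 3 * τ - 1 by omega] at h1
    rw [h1]
    simp only [show ∀ k : ℕ, J + 1 - 1 + k = J + k from fun k => by omega]
  have hEB : sub T (J + 2) (J + 2 + 3 * τ - 1)
      = (List.range (3 * τ - 1)).map (fun k => T.getD (J + 1 + k) 0) := by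
    have h1 := sub_eq_map T (J + 2) (3 * τ - 1) (by omega) (by omega)
    rw [show J + 2 + (3 * τ - 1) = J + 2 + 3 * τ - 1 by omega] at h1
    rw [h1]
    simp only [show ∀ k : ℕ, J + 2 - 1 + k = J + 1 + k from fun k => by omega]
  have hApos : 1 ≤ (sub T (J + 1) (J + 1 + 3 * τ - 1)).length := by
    rw [hEA, List.length_map, List.length_range]; omega
  have hBpos : 1 ≤ (sub T (J + 2) (J + 2 + 3 * τ - 1)).length := by
    rw [hEB, List.length_map, List.length_range]; omega
  have hAisp : IsPeriod (sub T (J + 1) (J + 1 + 3 * τ - 1)) pA := by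
    rw [hpAdef]; exact per_isPeriod hApos
  have hBisp : IsPeriod (sub T (J + 2) (J + 2 + 3 * τ - 1)) pB := by
    rw [hpBdef]; exact per_isPeriod hBpos
  rw [hEA] at hAisp
  rw [hEB] at hBisp
  obtain ⟨hpA1, hpAle, hAper'⟩ := isPeriod_map_range_iff.mp hAisp
  obtain ⟨hpB1, hpBle, hBper'⟩ := isPeriod_map_range_iff.mp hBisp
  have hAper : ∀ i, i + pA < 3 * τ - 1 → T.getD (J + i) 0 = T.getD (J + (i + pA)) 0 :=
    fun i hi => hAper' i hi
  have hBper : ∀ i, i + pB < 3 * τ - 1 → T.getD (J + 1 + i) 0 = T.getD (J + 1 + (i + pB)) 0 :=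
    fun i hi => hBper' i hi
  have hτ3 : 3 ≤ τ := by omega
  -- pA ≤ pB
  have hABle : pA ≤ pB := by
    have hBperiodA : IsPeriod ((List.range (3 * τ - 1)).map (fun k => T.getD (J + k) 0)) pB := by
      apply isPeriod_map_range_iff.mpr
      refine ⟨by omega, by omega, ?_⟩
      intro i hi
      rcases Nat.eq_zero_or_pos i with rfl | hip
      · have e1 := hAper 0 (by omega)
        have e2 := hBper (pA - 1) (by omega)
        have e3 := hAper pB (by omega)
        rw [show J + (0 + pA) = J + 1 + (pA - 1) by omega] at e1
        rw [show J + 1 + (pA - 1 + pB) = J + (pB + pA) by omega] at e2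
        rw [show (J + 0 : ℕ) = J by omega] at e1 ⊢
        rw [show J + (0 + pB) = J + pB by omega]
        exact ((e1.trans e2).trans e3.symm)
      · have e := hBper (i - 1) (by omega)
        rw [show J + 1 + (i - 1) = J + i by omega,
            show J + 1 + (i - 1 + pB) = J + (i + pB) by omega] at e
        exact e
    rw [hpAdef]
    exact per_le (by rw [hEA]; exact hBperiodA)
  -- pB ≤ pA
  have hBAle : pB ≤ pA := by
    have hCdiff' := period_diff (h := fun k => T.getD (J + 1 + k) 0) (p := pA) (q := pB)
      (L := 3 * τ - 2) hABle (by omega)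
      (fun i hi => by
        have e := hAper (i + 1) (by omega)
        show T.getD (J + 1 + i) 0 = T.getD (J + 1 + (i + pA)) 0
        rw [show J + 1 + i = J + (i + 1) by omega, show J + 1 + (i + pA) = J + (i + 1 + pA) by omega]
        exact e)
      (fun i hi => hBper i (by omega))
    have hCdiff : ∀ i, i + (pB - pA) < 3 * τ - 2 →
        T.getD (J + 1 + i) 0 = T.getD (J + 1 + (i + (pB - pA))) 0 := fun i hi => hCdiff' i hi
    have hAperiodB : IsPeriod ((List.range (3 * τ - 1)).map (fun k => T.getD (J + 1 + k) 0)) pA := by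
      apply isPeriod_map_range_iff.mpr
      refine ⟨by omega, by omega, ?_⟩
      intro i hi
      rcases lt_or_ge (i + pA) (3 * τ - 2) with hc | hc
      · have e := hAper (i + 1) (by omega)
        rw [show J + (i + 1) = J + 1 + i by omega,
            show J + (i + 1 + pA) = J + 1 + (i + pA) by omega] at e
        exact e
      · have hieq : i = 3 * τ - 2 - pA := by omega
        have e1 := hBper (3 * τ - 2 - pB) (by omega)
        have e2 := hCdiff (3 * τ - 2 - pB) (by omega)
        rw [show 3 * τ - 2 - pB + (pB - pA) = 3 * τ - 2 - pA by omega] at e2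
        rw [show 3 * τ - 2 - pB + pB = 3 * τ - 2 by omega] at e1
        rw [hieq, show 3 * τ - 2 - pA + pA = 3 * τ - 2 by omega]
        exact e2.symm.trans e1
    rw [hpBdef]
    exact per_le (by rw [hEB]; exact hAperiodB)
  have hpp : pA = pB := le_antisymm hABle hBAle
  -- D period
  have hDper : ∀ i, i + pB < 3 * τ → T.getD (J + i) 0 = T.getD (J + i + pB) 0 := by
    intro i hi
    rcases lt_or_ge (i + pB) (3 * τ - 1) with hc | hc
    · have e := hAper i (by omega)
      rw [show J + (i + pA) = J + i + pA by omega, hpp] at e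
      exact e
    · have hi1 : 1 ≤ i := by omega
      have e := hBper (i - 1) (by omega)
      rw [show J + 1 + (i - 1) = J + i by omega,
          show J + 1 + (i - 1 + pB) = J + i + pB by omega] at e
      exact e
  -- windows
  have hw1 : ∀ t, t ≤ pB → sub T (J + 1 + t) (J + 1 + t + pB)
      = (List.range pB).map (fun k => T.getD (J + t + k) 0) := by
    intro t ht
    have h1 := sub_eq_map T (J + 1 + t) pB (by omega) (by omega)
    rw [h1]
    simp only [show ∀ k : ℕ, J + 1 + t - 1 + k = J + t + k from fun k => by omega]
  have hw2 : ∀ t, t ≤ pB → sub T (J + 2 + t) (J + 2 + t + pB)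
      = (List.range pB).map (fun k => T.getD (J + 1 + t + k) 0) := by
    intro t ht
    have h1 := sub_eq_map T (J + 2 + t) pB (by omega) (by omega)
    rw [h1]
    simp only [show ∀ k : ℕ, J + 2 + t - 1 + k = J + 1 + t + k from fun k => by omega]
  have hshiftpt : ∀ k, k < pB → T.getD (J + 0 + k) 0 = T.getD (J + pB + k) 0 := by
    intro k hk
    have e := hDper k (by omega)
    rw [show J + 0 + k = J + k by omega, show J + pB + k = J + k + pB by omega]
    exact e
  -- Finset image equality
  have hFeq : (Finset.range pB).image (fun t => sub T (J + 1 + t) (J + 1 + t + pB))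
      = (Finset.range pB).image (fun t => sub T (J + 2 + t) (J + 2 + t + pB)) := by
    apply Finset.ext
    intro X
    simp only [Finset.mem_image, Finset.mem_range]
    constructor
    · rintro ⟨t, ht, rfl⟩
      rcases Nat.eq_zero_or_pos t with rfl | htp
      · refine ⟨pB - 1, by omega, ?_⟩
        rw [hw2 (pB - 1) (by omega), hw1 0 (by omega)]
        have hpt : ∀ k, k < pB → T.getD (J + 1 + (pB - 1) + k) 0 = T.getD (J + 0 + k) 0 := by
          intro k hk
          have e := hshiftpt k hk
          rw [show J + 1 + (pB - 1) + k = J + pB + k by omega]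
          exact e.symm
        exact map_range_eq_iff.mpr hpt
      · refine ⟨t - 1, by omega, ?_⟩
        rw [hw2 (t - 1) (by omega), hw1 t (by omega)]
        have hpt : ∀ k, k < pB → T.getD (J + 1 + (t - 1) + k) 0 = T.getD (J + t + k) 0 := by
          intro k hk
          rw [show J + 1 + (t - 1) + k = J + t + k by omega]
        exact map_range_eq_iff.mpr hpt
    · rintro ⟨t, ht, rfl⟩
      rcases lt_or_ge (t + 1) pB with hc | hc
      · refine ⟨t + 1, hc, ?_⟩
        rw [hw1 (t + 1) (by omega), hw2 t (by omega)]
        have hpt : ∀ k, k < pB → T.getD (J + (t + 1) + k) 0 = T.getD (J + 1 + t + k) 0 := by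
          intro k hk
          rw [show J + (t + 1) + k = J + 1 + t + k by omega]
        exact map_range_eq_iff.mpr hpt
      · refine ⟨0, by omega, ?_⟩
        rw [hw1 0 (by omega), hw2 t (by omega)]
        have hpt : ∀ k, k < pB → T.getD (J + 0 + k) 0 = T.getD (J + 1 + t + k) 0 := by
          intro k hk
          have e := hshiftpt k hk
          rw [show J + 1 + t + k = J + pB + k by omega]
          exact e
        exact map_range_eq_iff.mpr hpt
  have hLroot : Lroot T τ (J + 1) = Lroot T τ (J + 2) := by
    unfold Lroot
    rw [← hpAdef, ← hpBdef, hpp, hFeq]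
  -- rend
  have hsetEq : {j' | J + 1 ≤ j' ∧ j' ∉ R T τ} = {j' | J + 2 ≤ j' ∧ j' ∉ R T τ} := by
    ext x
    simp only [Set.mem_setOf_eq]
    constructor
    · rintro ⟨h1, h2⟩
      refine ⟨?_, h2⟩
      rcases eq_or_lt_of_le h1 with heq | hlt
      · exact absurd (heq ▸ hjR') h2
      · omega
    · rintro ⟨h1, h2⟩
      exact ⟨by omega, h2⟩
  have hrend : rend T τ (J + 1) = rend T τ (J + 2) := by
    unfold rend
    rw [hsetEq]
  have hmemS : T.length + 1 ∈ {j' | J + 2 ≤ j' ∧ j' ∉ R T τ} := by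
    refine ⟨by omega, ?_⟩
    intro hc
    simp only [R, Set.mem_setOf_eq] at hc
    omega
  have hInf := Nat.sInf_mem (⟨T.length + 1, hmemS⟩ : Set.Nonempty {j' | J + 2 ≤ j' ∧ j' ∉ R T τ})
  have hrendge : J + 3 * τ ≤ rend T τ (J + 2) := by
    have h1 : J + 2 ≤ sInf {j' | J + 2 ≤ j' ∧ j' ∉ R T τ} := hInf.1
    unfold rend
    omega
  -- Lroot is attained
  have himgne : ((Finset.range pB).image (fun t => sub T (J + 2 + t) (J + 2 + t + pB))).Nonempty :=
    ⟨_, Finset.mem_image_of_mem _ (Finset.mem_range.mpr (show 0 < pB by omega))⟩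
  have hHmem : Lroot T τ (J + 2) ∈ (Finset.range pB).image (fun t => sub T (J + 2 + t) (J + 2 + t + pB)) := by
    unfold Lroot
    rw [← hpBdef]
    rw [← Finset.coe_min' himgne, WithTop.untopD_coe]
    exact Finset.min'_mem _ _
  obtain ⟨t₀, ht₀', hwt₀⟩ := Finset.mem_image.mp hHmem
  rw [Finset.mem_range] at ht₀'
  -- Lhead of (J+2)
  have hsmem : Lhead T τ (J + 2) < pB ∧
      sub T (J + 2 + Lhead T τ (J + 2)) (J + 2 + Lhead T τ (J + 2) + pB) = Lroot T τ (J + 2) := by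
    have hne' : {s | s < pB ∧ sub T (J + 2 + s) (J + 2 + s + pB) = Lroot T τ (J + 2)}.Nonempty :=
      ⟨t₀, by exact ⟨ht₀', hwt₀⟩⟩
    have h2 := Nat.sInf_mem hne'
    have h3 : Lhead T τ (J + 2) = sInf {s | s < pB ∧ sub T (J + 2 + s) (J + 2 + s + pB) = Lroot T τ (J + 2)} := by
      unfold Lhead
      rw [← hpBdef]
    rw [h3]
    exact h2
  -- no two close occurrences
  have hocc2 : ∀ a d : ℕ, 1 ≤ d → d < pB → a + d ≤ pB →
      sub T (J + 1 + a) (J + 1 + a + pB) = sub T (J + 1 + (a + d)) (J + 1 + (a + d) + pB) → False := by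
    intro a d hd1 hdp had heq
    rw [hw1 a (by omega), hw1 (a + d) (by omega)] at heq
    have hpt' := map_range_eq_iff.mp heq
    have hpt : ∀ k, k < pB → T.getD (J + a + k) 0 = T.getD (J + (a + d) + k) 0 :=
      fun k hk => hpt' k hk
    have hgcd' := occ_far (h := fun k => T.getD (J + k) 0) (m := 3 * τ - 1) (p := pB) (a := a) (d := d)
      (by omega) hd1 hdp (by omega)
      (fun i hi => by
        have e := hDper i (by omega)
        show T.getD (J + i) 0 = T.getD (J + (i + pB)) 0
        rw [show J + (i + pB) = J + i + pB by omega]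
        exact e)
      had
      (fun k hk => by
        have e := hpt k hk
        show T.getD (J + (a + k)) 0 = T.getD (J + (a + d + k)) 0
        rw [show J + (a + k) = J + a + k by omega, show J + (a + d + k) = J + (a + d) + k by omega]
        exact e)
    have hgcd : ∀ i, i + Nat.gcd d pB < 3 * τ - 1 →
        T.getD (J + i) 0 = T.getD (J + (i + Nat.gcd d pB)) 0 := fun i hi => hgcd' i hi
    have hgle : Nat.gcd d pB ≤ d := Nat.gcd_le_left _ hd1
    have hg1 : 1 ≤ Nat.gcd d pB := Nat.gcd_pos_of_pos_left _ hd1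
    have hAgcd : IsPeriod ((List.range (3 * τ - 1)).map (fun k => T.getD (J + k) 0)) (Nat.gcd d pB) := by
      apply isPeriod_map_range_iff.mpr
      exact ⟨hg1, by omega, fun i hi => hgcd i hi⟩
    have hperred : pA ≤ Nat.gcd d pB := by
      rw [hpAdef]
      exact per_le (by rw [hEA]; exact hAgcd)
    omega
  set s := Lhead T τ (J + 2) with hsdef
  have hs1 : s < pB := hsmem.1
  have hsH : sub T (J + 2 + s) (J + 2 + s + pB) = Lroot T τ (J + 2) := hsmem.2
  have hLheadA' : Lhead T τ (J + 1)
      = sInf {s' | s' < pB ∧ sub T (J + 1 + s') (J + 1 + s' + pB) = Lroot T τ (J + 2)} := by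
    unfold Lhead
    rw [← hpAdef, hpp, hLroot]
  have hcases : (s + 1 < pB ∧ Lhead T τ (J + 1) = s + 1) ∨ (s + 1 = pB ∧ Lhead T τ (J + 1) = 0) := by
    rcases lt_or_ge (s + 1) pB with hc | hc
    · left
      refine ⟨hc, ?_⟩
      rw [hLheadA']
      have hmem1 : (s + 1) ∈ {s' | s' < pB ∧ sub T (J + 1 + s') (J + 1 + s' + pB) = Lroot T τ (J + 2)} := by
        refine ⟨hc, ?_⟩
        rw [show J + 1 + (s + 1) = J + 2 + s by omega]
        exact hsH
      have huniq : ∀ x ∈ {s' | s' < pB ∧ sub T (J + 1 + s') (J + 1 + s' + pB) = Lroot T τ (J + 2)}, x = s + 1 := by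
        rintro x ⟨hx1, hx2⟩
        by_contra hne
        rcases lt_or_gt_of_ne hne with hlt | hgt
        · refine hocc2 x (s + 1 - x) (by omega) (by omega) (by omega) ?_
          rw [show J + 1 + (x + (s + 1 - x)) = J + 1 + (s + 1) by omega]
          exact hx2.trans hmem1.2.symm
        · refine hocc2 (s + 1) (x - (s + 1)) (by omega) (by omega) (by omega) ?_
          rw [show J + 1 + (s + 1 + (x - (s + 1))) = J + 1 + x by omega]
          exact hmem1.2.trans hx2.symm
      exact huniq _ (Nat.sInf_mem ⟨_, hmem1⟩)
    · right
      have hc' : s + 1 = pB := by omega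
      refine ⟨hc', ?_⟩
      rw [hLheadA']
      have hmem0 : (0 : ℕ) ∈ {s' | s' < pB ∧ sub T (J + 1 + s') (J + 1 + s' + pB) = Lroot T τ (J + 2)} := by
        refine ⟨by omega, ?_⟩
        have e : sub T (J + 1 + 0) (J + 1 + 0 + pB) = sub T (J + 1 + pB) (J + 1 + pB + pB) := by
          rw [hw1 0 (by omega), hw1 pB (by omega)]
          exact map_range_eq_iff.mpr hshiftpt
        have hsH' := hsH
        rw [show J + 2 + s = J + 1 + pB by omega] at hsH'
        exact e.trans hsH'
      exact le_antisymm (Nat.sInf_le hmem0) (Nat.zero_le _)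
  -- Ltail
  have hLtail : Ltail T τ (J + 1) = Ltail T τ (J + 2) := by
    unfold Ltail
    rw [← hpAdef, ← hpBdef, hpp, hrend, ← hsdef]
    rcases hcases with ⟨hc, hL⟩ | ⟨hc, hL⟩
    · rw [hL]
      rw [show rend T τ (J + 2) - (J + 1) - (s + 1) = rend T τ (J + 2) - (J + 2) - s by omega]
    · rw [hL]
      rw [show rend T τ (J + 2) - (J + 1) - 0 = rend T τ (J + 2) - (J + 2) - s + pB by omega]
      exact Nat.add_mod_right _ _
  have hrendfull : rendfull T τ (J + 1) = rendfull T τ (J + 2) := by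
    unfold rendfull
    rw [hrend, hLtail]
  have htyp : typ T τ (J + 1) = typ T τ (J + 2) := by
    unfold typ
    rw [← hpAdef, ← hpBdef, hpp, hrend]
  exact ⟨hLroot, hrend, hLtail, hrendfull, htyp⟩
end CSA
end

section
/- Let Roots = {L-root(j) : j ∈ R}, and for H ∈ Roots let pow(H) denote the prefix of length |H|·⌈τ/|H|⌉ of the infinite string HHH⋯. Then: (i) for all X, Y ∈ Roots, X ≺ Y implies pow(X) ≺ pow(Y); and (ii) the set {pow(H) : H ∈ Roots} is prefix-free, i.e., for all distinct X, Y ∈ Roots, pow(X) ≠ pow(Y) and pow(X) is not a prefix of pow(Y). -/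
open scoped Classical

namespace CSA

def rep (X : List ℕ) (i : ℕ) : ℕ := X.getD (i % X.length) 0
def itake (X : List ℕ) (m : ℕ) : List ℕ := (List.range m).map (rep X)

lemma getD_prefix {A B : List ℕ} (h : A <+: B) {k : ℕ} (hk : k < A.length) :
    A.getD k 0 = B.getD k 0 := by
  obtain ⟨t, rfl⟩ := h
  rw [List.getD_eq_getElem _ _ hk, List.getD_eq_getElem _ _ (by simp; omega),
    List.getElem_append_left hk]

lemma le_of_prefix {A B : List ℕ} (h : A <+: B) : A ≤ B := by
  obtain ⟨t, rfl⟩ := h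
  rcases t with _ | ⟨b, t⟩
  · simp
  · refine le_of_lt ?_
    show List.Lex (· < ·) A (A ++ b :: t)
    induction A with
    | nil => exact List.Lex.nil
    | cons a A ih => exact List.Lex.cons ih

lemma mism_lt : ∀ {i : ℕ} {A B : List ℕ}, i < A.length → i < B.length →
    (∀ k, k < i → A.getD k 0 = B.getD k 0) → A.getD i 0 < B.getD i 0 → A < B := by
  intro i
  induction i with
  | zero =>
    rintro (_|⟨a,A⟩) (_|⟨b,B⟩) hA hB _ hlt
    · simp at hA
    · simp at hA
    · simp at hB
    · rw [List.getD_cons_zero, List.getD_cons_zero] at hlt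
      exact List.Lex.rel hlt
  | succ i ih =>
    rintro (_|⟨a,A⟩) (_|⟨b,B⟩) hA hB hpre hlt
    · simp at hA
    · simp at hA
    · simp at hB
    · have hab : a = b := by
        have := hpre 0 (by omega)
        rwa [List.getD_cons_zero, List.getD_cons_zero] at this
      subst hab
      refine List.Lex.cons (ih (by simpa using hA) (by simpa using hB)
        (fun k hk => ?_) (by simpa [List.getD_cons_succ] using hlt))
      have := hpre (k+1) (by omega)
      rwa [List.getD_cons_succ, List.getD_cons_succ] at this

lemma tricho2 : ∀ (A B : List ℕ), A <+: B ∨ B <+: A ∨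
    ∃ i, i < A.length ∧ i < B.length ∧ (∀ k, k < i → A.getD k 0 = B.getD k 0) ∧
      A.getD i 0 ≠ B.getD i 0 := by
  intro A
  induction A with
  | nil => intro B; exact Or.inl (List.nil_prefix)
  | cons a A ih =>
    rintro (_|⟨b,B⟩)
    · exact Or.inr (Or.inl (List.nil_prefix))
    · by_cases hab : a = b
      · subst hab
        rcases ih B with h | h | ⟨i, h1, h2, h3, h4⟩
        · exact Or.inl (List.cons_prefix_cons.mpr ⟨rfl, h⟩)
        · exact Or.inr (Or.inl (List.cons_prefix_cons.mpr ⟨rfl, h⟩))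
        · refine Or.inr (Or.inr ⟨i+1, by simpa using h1, by simpa using h2, ?_,
            by simpa [List.getD_cons_succ] using h4⟩)
          rintro (_|k) hk
          · simp
          · simpa [List.getD_cons_succ] using h3 k (by omega)
      · exact Or.inr (Or.inr ⟨0, by simp, by simp, by omega,
          by simpa [List.getD_cons_zero] using hab⟩)

lemma append_left_le {u v : List ℕ} (s : List ℕ) (h : u ≤ v) : s ++ u ≤ s ++ v := by
  rcases eq_or_lt_of_le h with rfl | h
  · exact le_rfl
  · exact le_of_lt (List.Lex.append_left _ h s)

lemma append_left_le_iff {s u v : List ℕ} : s ++ u ≤ s ++ v ↔ u ≤ v := by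
  constructor
  · intro h
    by_contra hc
    have : v < u := not_le.mp hc
    exact absurd (lt_of_lt_of_le (List.Lex.append_left _ this s : s ++ v < s ++ u) h)
      (lt_irrefl _)
  · exact append_left_le s

lemma lex_append_right_eqlen : ∀ {u v : List ℕ}, List.Lex (α := ℕ) (· < ·) u v →
    u.length = v.length → ∀ w, List.Lex (α := ℕ) (· < ·) (u ++ w) (v ++ w)
  | _, _, List.Lex.nil, hl => by simp at hl
  | _, _, List.Lex.cons h, hl => fun w =>
      List.Lex.cons (lex_append_right_eqlen h (by simpa using hl) w)
  | _, _, List.Lex.rel h, _ => fun _ => List.Lex.rel h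

lemma append_right_le {u v : List ℕ} (h : u ≤ v) (hl : u.length = v.length)
    (w : List ℕ) : u ++ w ≤ v ++ w := by
  rcases eq_or_lt_of_le h with rfl | h
  · exact le_rfl
  · exact le_of_lt (lex_append_right_eqlen h hl w)


@[simp] lemma length_itake (X : List ℕ) (m : ℕ) : (itake X m).length = m := by
  simp [itake]

lemma getD_itake {X : List ℕ} {m k : ℕ} (hk : k < m) : (itake X m).getD k 0 = rep X k := by
  rw [List.getD_eq_getElem _ _ (by simpa using hk)]
  simp [itake]

lemma rep_eq_getD {X : List ℕ} {i : ℕ} (h : i < X.length) : rep X i = X.getD i 0 := by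
  simp [rep, Nat.mod_eq_of_lt h]

lemma rep_add_length (X : List ℕ) (k : ℕ) : rep X (X.length + k) = rep X k := by
  simp [rep, Nat.add_mod_left]

lemma itake_self {X : List ℕ} : itake X X.length = X := by
  apply List.ext_getElem (by simp)
  intro i h1 h2
  simp only [itake, List.getElem_map, List.getElem_range]
  rw [rep_eq_getD (by simpa using h1), List.getD_eq_getElem _ _ (by simpa using h1)]

lemma itake_add (X : List ℕ) (a b : ℕ) :
    itake X (a + b) = itake X a ++ (List.range b).map (fun k => rep X (a + k)) := by
  simp [itake, List.range_add, Function.comp]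

lemma itake_add_full (X : List ℕ) (b : ℕ) :
    itake X (X.length + b) = X ++ itake X b := by
  rw [itake_add, itake_self]
  congr 1
  simp [itake]
  intro k hk
  exact rep_add_length X k

lemma getD_rotate (l : List ℕ) (n k : ℕ) (hk : k < l.length) :
    (l.rotate n).getD k 0 = l.getD ((k + n) % l.length) 0 := by
  have h0 : 0 < l.length := by omega
  rw [List.getD_eq_getElem _ _ (by simpa using hk),
    List.getD_eq_getElem _ _ (Nat.mod_lt _ h0)]
  exact List.getElem_rotate l n k (by simpa using hk)

/-- rotation: for `Y = X ++ Z` nonempty, `rep Y (|X| + k) = rep (Z ++ X) k`. -/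
lemma rep_append_shift {X Z : List ℕ} (hX : X ++ Z ≠ []) (k : ℕ) :
    rep (X ++ Z) (X.length + k) = rep (Z ++ X) k := by
  have hL : 0 < (X ++ Z).length := List.length_pos_iff.mpr hX
  have hR : Z ++ X = (X ++ Z).rotate X.length := by
    rw [List.rotate_eq_drop_append_take (by simp)]
    simp
  have hlen : (Z ++ X).length = (X ++ Z).length := by simp [Nat.add_comm]
  rw [rep, rep, hlen, hR, getD_rotate _ _ _ (Nat.mod_lt _ hL),
    Nat.mod_add_mod, Nat.add_comm k X.length]

/-- Stepwise periods reduce indices mod p. -/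
lemma period_mod {C : List ℕ} {p : ℕ} (hp : 0 < p)
    (h : ∀ i, i + p < C.length → C.getD i 0 = C.getD (i + p) 0) :
    ∀ i, i < C.length → C.getD i 0 = C.getD (i % p) 0 := by
  intro i
  induction i using Nat.strong_induction_on with
  | _ i ih =>
    intro hi
    rcases lt_or_ge i p with h' | h'
    · rw [Nat.mod_eq_of_lt h']
    · have h1 : i - p + p < C.length := by omega
      have := h (i - p) h1
      rw [Nat.sub_add_cancel h'] at this
      rw [← this, ih (i - p) (by omega) (by omega)]
      congr 1
      conv_rhs => rw [← Nat.sub_add_cancel h', Nat.add_mod_right]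

/-- Weak Fine–Wilf. -/
lemma fine_wilf : ∀ (N : ℕ) (C : List ℕ) (p q : ℕ), p + q ≤ N → 0 < p → 0 < q →
    p + q ≤ C.length →
    (∀ i, i + p < C.length → C.getD i 0 = C.getD (i + p) 0) →
    (∀ i, i + q < C.length → C.getD i 0 = C.getD (i + q) 0) →
    ∀ i, i + Nat.gcd p q < C.length → C.getD i 0 = C.getD (i + Nat.gcd p q) 0 := by
  intro N
  induction N with
  | zero => intro C p q hN hp hq; omega
  | succ N ih =>
    intro C p q hN hp hq hlen hP hQ
    rcases lt_trichotomy p q with h | rfl | h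
    · -- p < q : recurse with (p, q - p)
      have hg : Nat.gcd p (q - p) = Nat.gcd p q := by
        rw [Nat.gcd_comm p (q-p), Nat.gcd_comm p q, Nat.gcd_sub_self_left (le_of_lt h)]
      have hQ' : ∀ i, i + (q - p) < C.length → C.getD i 0 = C.getD (i + (q - p)) 0 := by
        intro i hi
        rcases lt_or_ge (i + q) C.length with hc | hc
        · rw [hQ i hc, hP (i + (q - p)) (by omega)]
          congr 1; omega
        · have h1 : p ≤ i := by omega
          rw [show i = i - p + p by omega, ← hP (i - p) (by omega),
            hQ (i - p) (by omega)]
          congr 1; omega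
      have := ih C p (q - p) (by omega) hp (by omega) (by omega) hP hQ'
      rw [← hg]
      exact this
    · intro i hi
      rw [Nat.gcd_self] at hi ⊢
      exact hP i hi
    · -- q < p
      have hg : Nat.gcd (p - q) q = Nat.gcd p q := by
        rw [Nat.gcd_comm (p - q) q, Nat.gcd_comm p q, Nat.gcd_sub_self_right (le_of_lt h)]
      have hP' : ∀ i, i + (p - q) < C.length → C.getD i 0 = C.getD (i + (p - q)) 0 := by
        intro i hi
        rcases lt_or_ge (i + p) C.length with hc | hc
        · rw [hP i hc, hQ (i + (p - q)) (by omega)]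
          congr 1; omega
        · have h1 : q ≤ i := by omega
          rw [show i = i - q + q by omega, ← hQ (i - q) (by omega),
            hP (i - q) (by omega)]
          congr 1; omega
      have := ih C (p - q) q (by omega) (by omega) hq (by omega) hP' hQ
      rw [← hg]
      exact this

/-- Primitivity, phrased via `rep`. -/
def Prim (X : List ℕ) : Prop :=
  ∀ d, 0 < d → d ∣ X.length → (∀ k, rep X (k + d) = rep X k) → X.length ≤ d

/-- Lemma M: distinct primitive words have a mismatch before `|X|+|Y|`. -/
lemma mismatch_exists {X Y : List ℕ} (hX : X ≠ []) (hY : Y ≠ [])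
    (hpX : Prim X) (hpY : Prim Y) (hne : X ≠ Y) :
    ∃ i, i < X.length + Y.length ∧ rep X i ≠ rep Y i := by
  by_contra hc
  push_neg at hc
  set p := X.length with hp
  set q := Y.length with hq
  have hp0 : 0 < p := List.length_pos_iff.mpr hX
  have hq0 : 0 < q := List.length_pos_iff.mpr hY
  set C := itake X (p + q) with hC
  have hClen : C.length = p + q := by simp [hC]
  have hCget : ∀ i, i < p + q → C.getD i 0 = rep X i := fun i hi => getD_itake hi
  have hPer : ∀ i, i + p < C.length → C.getD i 0 = C.getD (i + p) 0 := by
    intro i hi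
    rw [hClen] at hi
    rw [hCget i (by omega), hCget (i+p) hi]
    simp [rep, hp, Nat.add_mod_right]
  have hQer : ∀ i, i + q < C.length → C.getD i 0 = C.getD (i + q) 0 := by
    intro i hi
    rw [hClen] at hi
    rw [hCget i (by omega), hCget (i+q) hi, hc i (by omega), hc (i+q) hi]
    simp [rep, hq, Nat.add_mod_right]
  set g := Nat.gcd p q with hg
  have hg0 : 0 < g := Nat.gcd_pos_of_pos_left _ hp0
  have hGer := fine_wilf (p+q) C p q le_rfl hp0 hq0 (by omega) hPer hQer
  have hmodC : ∀ i, i < C.length → C.getD i 0 = C.getD (i % g) 0 :=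
    period_mod hg0 hGer
  -- rep X is g-periodic
  have hrepmod : ∀ Z : List ℕ, Z.length = p ∨ Z.length = q →
      (∀ i, i < p + q → C.getD i 0 = rep Z i) → ∀ k, rep Z (k + g) = rep Z k := by
    intro Z hZlen hZ k
    have hgd : g ∣ Z.length := by
      rcases hZlen with h | h <;> rw [h]
      · exact Nat.gcd_dvd_left _ _
      · exact Nat.gcd_dvd_right _ _
    have hZ0 : 0 < Z.length := by rcases hZlen with h | h <;> omega
    have h1 : ∀ m, rep Z m = C.getD (m % g) 0 := by
      intro m
      have hm : m % Z.length < p + q := by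
        have := Nat.mod_lt m hZ0
        rcases hZlen with h | h <;> omega
      have : rep Z m = C.getD (m % Z.length) 0 := by
        rw [hZ _ hm, rep, rep, Nat.mod_mod_of_dvd]
        exact dvd_refl _
      rw [this, hmodC _ (by omega), Nat.mod_mod_of_dvd _ hgd]
    rw [h1 (k+g), h1 k, Nat.add_mod_right]
  have hXg := hrepmod X (Or.inl rfl) hCget
  have hYg := hrepmod Y (Or.inr rfl) (fun i hi => by rw [hCget i hi, hc i hi])
  have hpg : p ≤ g := hpX g hg0 (Nat.gcd_dvd_left _ _) hXg
  have hqg : q ≤ g := hpY g hg0 (Nat.gcd_dvd_right _ _) hYg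
  have hgp : g ≤ p := Nat.le_of_dvd hp0 (Nat.gcd_dvd_left _ _)
  have hgq : g ≤ q := Nat.le_of_dvd hq0 (Nat.gcd_dvd_right _ _)
  have hpq : p = q := by omega
  apply hne
  apply List.ext_getElem (by omega)
  intro i h1 h2
  have : rep X i = rep Y i := hc i (by omega)
  rw [rep_eq_getD h1, rep_eq_getD h2] at this
  rwa [List.getD_eq_getElem _ _ h1, List.getD_eq_getElem _ _ h2] at this

lemma eq_of_getD {A B : List ℕ} (hlen : A.length = B.length)
    (h : ∀ k, k < A.length → A.getD k 0 = B.getD k 0) : A = B := by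
  refine List.ext_getElem hlen fun k h1 h2 => ?_
  have := h k h1
  rwa [List.getD_eq_getElem _ _ h1, List.getD_eq_getElem _ _ h2] at this

lemma itake_eq_append {Y W : List ℕ} {a m : ℕ} (h : a ≤ m)
    (hshift : ∀ k, rep Y (a + k) = rep W k) :
    itake Y m = itake Y a ++ itake W (m - a) := by
  conv_lhs => rw [show m = a + (m - a) by omega]
  rw [itake_add]
  congr 1
  simp only [itake]
  exact List.map_congr_left fun k _ => hshift k

lemma itake_prefix {X Y : List ℕ} (h : X <+: Y) : itake Y X.length = X := by
  refine eq_of_getD (by simp) fun k hk => ?_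
  simp only [length_itake] at hk
  rw [getD_itake hk, rep_eq_getD (lt_of_lt_of_le hk h.length_le), getD_prefix h hk]

lemma itake_congr {X Y : List ℕ} {m : ℕ} (h : ∀ k, k < m → rep X k = rep Y k) :
    itake X m = itake Y m := by
  refine eq_of_getD (by simp) fun k hk => ?_
  simp only [length_itake] at hk
  rw [getD_itake hk, getD_itake hk]
  exact h k hk

lemma itake_le (m : ℕ) : ∀ (X Y : List ℕ), X ≠ [] → Y ≠ [] →
    X ++ Y ≤ Y ++ X → itake X m ≤ itake Y m := by
  induction m using Nat.strong_induction_on with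
  | _ m IH =>
  intro X Y hX hY hle
  have hX0 : 0 < X.length := List.length_pos_iff.mpr hX
  have hY0 : 0 < Y.length := List.length_pos_iff.mpr hY
  have hgetl : ∀ (A B : List ℕ) k, k < A.length → (A ++ B).getD k 0 = A.getD k 0 :=
    fun A B k hk => (getD_prefix ⟨B, rfl⟩ hk).symm
  rcases tricho2 X Y with hpre | hpre | ⟨i, hiX, hiY, hagree, hne⟩
  · -- X <+: Y
    rcases eq_or_ne X Y with rfl | hne
    · exact le_rfl
    · obtain ⟨Z, hZ⟩ := hpre
      have hZne : Z ≠ [] := by rintro rfl; simp at hZ; exact hne hZ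
      have hxy : X.length + Z.length = Y.length := by rw [← hZ]; simp
      rcases le_or_gt m X.length with hm | hm
      · refine le_of_eq (itake_congr fun k hk => ?_)
        rw [rep_eq_getD (by omega), rep_eq_getD (by omega), ← hZ,
          hgetl X Z k (by omega)]
      · have hstrip : X ++ Z ≤ Z ++ X := by
          have hcalc : X ++ (X ++ Z) ≤ X ++ (Z ++ X) := by
            calc X ++ (X ++ Z) = X ++ Y := by rw [hZ]
            _ ≤ Y ++ X := hle
            _ = X ++ (Z ++ X) := by rw [← hZ, List.append_assoc]
          exact append_left_le_iff.mp hcalc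
        have hrec : itake X (m - X.length) ≤ itake (Z ++ X) (m - X.length) := by
          refine IH _ (by omega) X (Z ++ X) hX (by simp [hZne]) ?_
          have h2 : (X ++ Z) ++ X ≤ (Z ++ X) ++ X :=
            append_right_le hstrip (by simp [Nat.add_comm]) X
          rwa [List.append_assoc] at h2
        have hsh : ∀ k, rep Y (X.length + k) = rep (Z ++ X) k := by
          intro k
          rw [← hZ]
          exact rep_append_shift (by rw [hZ]; exact hY) k
        have e1 : itake X m = X ++ itake X (m - X.length) := by
          rw [itake_eq_append (le_of_lt hm) (rep_add_length X), itake_prefix List.prefix_rfl]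
        have e2 : itake Y m = X ++ itake (Z ++ X) (m - X.length) := by
          rw [itake_eq_append (a := X.length) (by omega) hsh, itake_prefix ⟨Z, hZ⟩]
        rw [e1, e2]
        exact append_left_le X hrec
  · -- Y <+: X
    rcases eq_or_ne X Y with rfl | hne
    · exact le_rfl
    · obtain ⟨Z, hZ⟩ := hpre
      have hZne : Z ≠ [] := by rintro rfl; simp at hZ; exact hne hZ.symm
      have hxy : Y.length + Z.length = X.length := by rw [← hZ]; simp
      rcases le_or_gt m Y.length with hm | hm
      · refine le_of_eq (itake_congr fun k hk => ?_)
        rw [rep_eq_getD (by omega), rep_eq_getD (by omega), ← hZ,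
          hgetl Y Z k (by omega)]
      · have hstrip : Z ++ Y ≤ Y ++ Z := by
          have hcalc : Y ++ (Z ++ Y) ≤ Y ++ (Y ++ Z) := by
            calc Y ++ (Z ++ Y) = (Y ++ Z) ++ Y := by rw [List.append_assoc]
            _ = X ++ Y := by rw [hZ]
            _ ≤ Y ++ X := hle
            _ = Y ++ (Y ++ Z) := by rw [← hZ]
          exact append_left_le_iff.mp hcalc
        have hrec : itake (Z ++ Y) (m - Y.length) ≤ itake Y (m - Y.length) := by
          refine IH _ (by omega) (Z ++ Y) Y (by simp [hZne]) hY ?_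
          calc (Z ++ Y) ++ Y ≤ (Y ++ Z) ++ Y :=
                append_right_le hstrip (by simp [Nat.add_comm]) Y
          _ = Y ++ (Z ++ Y) := by rw [List.append_assoc]
        have hsh : ∀ k, rep X (Y.length + k) = rep (Z ++ Y) k := by
          intro k
          rw [← hZ]
          exact rep_append_shift (by rw [hZ]; exact hX) k
        have e1 : itake Y m = Y ++ itake Y (m - Y.length) := by
          rw [itake_eq_append (le_of_lt hm) (rep_add_length Y), itake_prefix List.prefix_rfl]
        have e2 : itake X m = Y ++ itake (Z ++ Y) (m - Y.length) := by
          rw [itake_eq_append (a := Y.length) (by omega) hsh, itake_prefix ⟨Z, hZ⟩]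
        rw [e1, e2]
        exact append_left_le Y hrec
  · -- mismatch at i
    have hlt : X.getD i 0 < Y.getD i 0 := by
      rcases lt_or_gt_of_ne hne with h | h
      · exact h
      · exfalso
        have : Y ++ X < X ++ Y := by
          refine mism_lt (i := i) (by simp; omega) (by simp; omega) (fun k hk => ?_) ?_
          · rw [hgetl Y X k (by omega), hgetl X Y k (by omega)]
            exact (hagree k hk).symm
          · rwa [hgetl Y X i hiY, hgetl X Y i hiX]
        exact absurd (lt_of_lt_of_le this hle) (lt_irrefl _)
    rcases le_or_gt m i with hm | hm
    · refine le_of_eq (itake_congr fun k hk => ?_)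
      rw [rep_eq_getD (by omega), rep_eq_getD (by omega)]
      exact hagree k (by omega)
    · refine le_of_lt (mism_lt (i := i) (by simpa using hm) (by simpa using hm)
        (fun k hk => ?_) ?_)
      · rw [getD_itake (by omega), getD_itake (by omega), rep_eq_getD (by omega),
          rep_eq_getD (by omega)]
        exact hagree k hk
      · rwa [getD_itake hm, getD_itake hm, rep_eq_getD hiX, rep_eq_getD hiY]


lemma getD_drop' {l : List ℕ} {t k : ℕ} (hk : k < (l.drop t).length) :
    (l.drop t).getD k 0 = l.getD (t + k) 0 := by
  rw [List.getD_eq_getElem _ _ hk, List.getD_eq_getElem _ _ (by simp at hk ⊢; omega)]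
  exact List.getElem_drop

lemma root_package {T : List ℕ} {τ j : ℕ} (hτ : 1 ≤ τ) (hj : j ∈ R T τ) :
    Lroot T τ j ≠ [] ∧ 3 * (Lroot T τ j).length ≤ τ ∧ Prim (Lroot T τ j) ∧
    (∀ r, Lroot T τ j ≤ (Lroot T τ j).rotate r) := by
  obtain ⟨hj1, hj2, hj3⟩ := hj
  set p := per (sub T j (j + 3 * τ - 1)) with hp
  set win := sub T j (j + 3 * τ - 1) with hwin
  set W := T.drop (j - 1) with hWdef
  have hWlen : 3 * τ - 1 ≤ W.length := by
    rw [hWdef, List.length_drop]; omega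
  have hwinW : win = W.take (3 * τ - 1) := by
    rw [hwin, sub, hWdef]
    congr 1
    omega
  have hwinlen : win.length = 3 * τ - 1 := by
    rw [hwinW, List.length_take]; omega
  have htriv : IsPeriod win (3 * τ - 1) :=
    ⟨by omega, by omega, fun i hi => by rw [hwinlen] at hi; exact absurd hi (by omega)⟩
  have hsetne : {q | IsPeriod win q}.Nonempty := ⟨_, htriv⟩
  have hper : IsPeriod win p := Nat.sInf_mem hsetne
  have hmin : ∀ d, IsPeriod win d → p ≤ d := fun d hd => Nat.sInf_le hd
  have hp1 : 1 ≤ p := hper.1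
  have hp3 : 3 * p ≤ τ := hj3
  have hplen : p ≤ 3 * τ - 1 := by have := hper.2.1; omega
  have hwg : ∀ k, k < 3 * τ - 1 → win.getD k 0 = W.getD k 0 := by
    intro k hk
    exact getD_prefix (by rw [hwinW]; exact List.take_prefix _ _) (by omega)
  have hmod : ∀ i, i < win.length → win.getD i 0 = win.getD (i % p) 0 :=
    period_mod hp1 hper.2.2
  set W0 := W.take p with hW0
  have hW0len : W0.length = p := by rw [hW0, List.length_take]; omega
  have hW0g : ∀ k, k < p → W0.getD k 0 = W.getD k 0 := by
    intro k hk
    exact getD_prefix (show W0 <+: W by rw [hW0]; exact List.take_prefix _ _) (by omega)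
  have hWm : ∀ i, i < 3 * τ - 1 → W.getD i 0 = W0.getD (i % p) 0 := by
    intro i hi
    rw [← hwg i hi, hmod i (by omega), hwg _ (by have := Nat.mod_lt i hp1; omega),
      ← hW0g _ (Nat.mod_lt i hp1)]
  have hcand : ∀ t, t < p → sub T (j + t) (j + t + p) = W0.rotate t := by
    intro t ht
    have hsub : sub T (j + t) (j + t + p) = (W.drop t).take p := by
      rw [sub, hWdef, List.drop_drop]
      congr 2
      · omega
      · omega
    rw [hsub]
    have hlen1 : ((W.drop t).take p).length = p := by
      simp only [List.length_take, List.length_drop]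
      omega
    refine eq_of_getD (by rw [hlen1, List.length_rotate, hW0len]) fun k hk => ?_
    rw [hlen1] at hk
    have h1 : ((W.drop t).take p).getD k 0 = W.getD (t + k) 0 := by
      rw [getD_prefix (List.take_prefix _ _) (by rwa [hlen1]), getD_drop' (by
        simp only [List.length_drop]; omega)]
    rw [h1, hWm (t + k) (by omega), getD_rotate _ _ _ (by omega),
      hW0len, Nat.add_comm k t]
  -- the Finset
  have hsne : ((Finset.range p).image fun t => sub T (j + t) (j + t + p)).Nonempty :=
    ⟨_, Finset.mem_image.mpr ⟨0, Finset.mem_range.mpr (by omega), rfl⟩⟩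
  have hLr : Lroot T τ j = ((Finset.range p).image fun t => sub T (j + t) (j + t + p)).min' hsne := by
    rw [Lroot, ← hwin, ← hp, ← Finset.coe_min' hsne, WithTop.untopD_coe]
  obtain ⟨sh, hshp, hsh⟩ := Finset.mem_image.mp (hLr ▸ Finset.min'_mem _ hsne)
  rw [Finset.mem_range] at hshp
  have hH : Lroot T τ j = W0.rotate sh := by rw [← hsh, hcand sh hshp]
  have hHle : ∀ t, t < p → Lroot T τ j ≤ W0.rotate t := by
    intro t ht
    rw [← hcand t ht, hLr]
    exact Finset.min'_le _ _ (Finset.mem_image.mpr ⟨t, Finset.mem_range.mpr ht, rfl⟩)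
  have hHlen : (Lroot T τ j).length = p := by rw [hH, List.length_rotate, hW0len]
  have hrot : ∀ r, Lroot T τ j ≤ (Lroot T τ j).rotate r := by
    intro r
    have e : (Lroot T τ j).rotate r = W0.rotate ((sh + r) % p) := by
      rw [hH, List.rotate_rotate, ← hW0len, List.rotate_mod]
    rw [e]
    exact hHle _ (Nat.mod_lt _ (by omega))
  refine ⟨by rw [← List.length_pos_iff] at *; omega, by omega, ?_, hrot⟩
  -- primitivity
  intro d hd0 hdvd hdper
  rw [hHlen] at hdvd ⊢
  by_contra hc
  push_neg at hc
  have hrepH : ∀ k, rep (Lroot T τ j) k = rep W0 (k + sh) := by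
    intro k
    rw [rep, rep, hHlen, hW0len, hH]
    rw [getD_rotate _ _ _ (by rw [hW0len]; exact Nat.mod_lt _ (by omega)),
      hW0len, Nat.mod_add_mod, Nat.add_comm]
  have hrepW0 : ∀ m, rep W0 (m + d) = rep W0 m := by
    intro m
    have h1 := hdper (m + p - sh)
    rw [hrepH, hrepH] at h1
    have e1 : m + p - sh + d + sh = m + d + p := by omega
    have e2 : m + p - sh + sh = m + p := by omega
    rw [e1, e2] at h1
    have e3 : rep W0 (m + d + p) = rep W0 (m + d) := by
      rw [Nat.add_comm (m + d) p, ← hW0len, rep_add_length]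
    have e4 : rep W0 (m + p) = rep W0 m := by
      rw [Nat.add_comm m p, ← hW0len, rep_add_length]
    rw [e3, e4] at h1
    exact h1
  have hwind : IsPeriod win d := by
    refine ⟨hd0, by omega, fun i hi => ?_⟩
    have hrw : ∀ i', i' < win.length → win.getD i' 0 = rep W0 i' := by
      intro i' hi'
      rw [hmod i' hi', hwg _ (by have := Nat.mod_lt i' hp1; omega),
        ← hW0g _ (Nat.mod_lt i' hp1), rep, hW0len]
    rw [hrw i (by omega), hrw (i + d) hi, hrepW0]
  exact absurd (hmin d hwind) (by omega)

lemma root_pair_le {X Y : List ℕ} (hX : X ≠ []) (hY : Y ≠ [])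
    (hrot : ∀ r, Y ≤ Y.rotate r) (hlt : X < Y) : X ++ Y ≤ Y ++ X := by
  rcases tricho2 X Y with hpre | hpre | ⟨i, hiX, hiY, hagree, hne⟩
  · rcases eq_or_ne X Y with rfl | hne
    · exact le_rfl
    · obtain ⟨Z, hZ⟩ := hpre
      have e : Y.rotate X.length = Z ++ X := by
        rw [List.rotate_eq_drop_append_take (by rw [← hZ]; simp), ← hZ,
          List.drop_left, List.take_left]
      have h1 : Y ≤ Z ++ X := by rw [← e]; exact hrot _
      calc X ++ Y ≤ X ++ (Z ++ X) := append_left_le X h1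
      _ = (X ++ Z) ++ X := by rw [List.append_assoc]
      _ = Y ++ X := by rw [hZ]
  · exact absurd hlt (not_lt.mpr (le_of_prefix hpre))
  · have hlt' : X.getD i 0 < Y.getD i 0 := by
      rcases lt_or_gt_of_ne hne with h | h
      · exact h
      · exact absurd (mism_lt hiY hiX (fun k hk => (hagree k hk).symm) h)
          (asymm hlt)
    have hgetl : ∀ (A B : List ℕ) k, k < A.length → (A ++ B).getD k 0 = A.getD k 0 :=
      fun A B k hk => (getD_prefix ⟨B, rfl⟩ hk).symm
    refine le_of_lt (mism_lt (i := i) (by rw [List.length_append]; omega)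
      (by rw [List.length_append]; omega) (fun k hk => ?_) ?_)
    · rw [hgetl X Y k (by omega), hgetl Y X k (by omega)]
      exact hagree k hk
    · rwa [hgetl X Y i hiX, hgetl Y X i hiY]

lemma roots_mismatch {X Y : List ℕ} (hX : X ≠ []) (hY : Y ≠ [])
    (hpX : Prim X) (hpY : Prim Y) (hrotY : ∀ r, Y ≤ Y.rotate r) (hlt : X < Y) :
    ∃ i, i < X.length + Y.length ∧ (∀ k, k < i → rep X k = rep Y k) ∧
      rep X i < rep Y i := by
  have hle : X ++ Y ≤ Y ++ X := root_pair_le hX hY hrotY hlt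
  obtain ⟨i0, hi0, hne0⟩ := mismatch_exists hX hY hpX hpY (ne_of_lt hlt)
  set m := X.length + Y.length with hm
  have hA := itake_le m X Y hX hY hle
  have hAne : itake X m ≠ itake Y m := by
    intro h
    apply hne0
    have h2 := congrArg (fun l => l.getD i0 0) h
    rwa [getD_itake (show i0 < m by omega), getD_itake (show i0 < m by omega)] at h2
  rcases tricho2 (itake X m) (itake Y m) with hp | hp | ⟨i, h1, h2, h3, h4⟩
  · exact absurd (hp.eq_of_length (by simp)) hAne
  · exact absurd (hp.eq_of_length (by simp)).symm hAne
  · simp only [length_itake] at h1 h2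
    refine ⟨i, h1, fun k hk => ?_, ?_⟩
    · have := h3 k hk
      rwa [getD_itake (by omega), getD_itake (by omega)] at this
    · rcases lt_or_gt_of_ne h4 with h | h
      · rwa [getD_itake h1, getD_itake h1] at h
      · exfalso
        have : itake Y m < itake X m := by
          refine mism_lt (i := i) (by simpa using h1) (by simpa using h1)
            (fun k hk => (h3 k hk).symm) ?_
          rwa [getD_itake h1, getD_itake h1] at h ⊢
        exact absurd (lt_of_lt_of_le this hA) (lt_irrefl _)

lemma flatten_replicate (X : List ℕ) : ∀ c, (List.replicate c X).flatten = itake X (c * X.length)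
  | 0 => by simp [itake]
  | (c+1) => by
    rw [List.replicate_succ, List.flatten_cons, flatten_replicate X c,
      show (c+1) * X.length = X.length + c * X.length by ring, itake_add_full]

lemma powS_eq_itake (τ : ℕ) (X : List ℕ) :
    powS τ X = itake X (((τ + X.length - 1) / X.length) * X.length) := by
  rw [powS, flatten_replicate]

lemma powS_len_ge {τ : ℕ} {X : List ℕ} (hX : X ≠ []) (hτ : 1 ≤ τ) :
    τ ≤ ((τ + X.length - 1) / X.length) * X.length := by
  have hL : 0 < X.length := List.length_pos_iff.mpr hX
  have h1 := Nat.div_add_mod (τ + X.length - 1) X.length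
  have h2 : (τ + X.length - 1) % X.length < X.length := Nat.mod_lt _ hL
  set a := (τ + X.length - 1) / X.length with ha
  have h3 : X.length * a = a * X.length := Nat.mul_comm _ _
  omega

/-- The main mismatch property for two roots `X < Y`. -/
lemma roots_main {T : List ℕ} {τ : ℕ} (hτ : 1 ≤ τ) {X Y : List ℕ}
    (hXR : ∃ j ∈ R T τ, Lroot T τ j = X) (hYR : ∃ j ∈ R T τ, Lroot T τ j = Y)
    (hlt : X < Y) :
    powS τ X < powS τ Y ∧ powS τ X ≠ powS τ Y ∧
    ¬ powS τ X <+: powS τ Y ∧ ¬ powS τ Y <+: powS τ X := by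
  obtain ⟨jx, hjx, rfl⟩ := hXR
  obtain ⟨jy, hjy, rfl⟩ := hYR
  set X := Lroot T τ jx
  set Y := Lroot T τ jy
  obtain ⟨hXne, hX3, hXprim, hXrot⟩ := root_package hτ hjx
  obtain ⟨hYne, hY3, hYprim, hYrot⟩ := root_package hτ hjy
  obtain ⟨i, hi, hagree, hmism⟩ := roots_mismatch hXne hYne hXprim hYprim hYrot hlt
  have hiτ : i < τ := by omega
  have hLX := powS_len_ge hXne hτ
  have hLY := powS_len_ge hYne hτ
  set LX := ((τ + X.length - 1) / X.length) * X.length with hLXdef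
  set LY := ((τ + Y.length - 1) / Y.length) * Y.length with hLYdef
  have hiLX : i < LX := by omega
  have hiLY : i < LY := by omega
  rw [powS_eq_itake, powS_eq_itake, ← hLXdef, ← hLYdef]
  have hagree' : ∀ k, k < i → (itake X LX).getD k 0 = (itake Y LY).getD k 0 := by
    intro k hk
    rw [getD_itake (by omega), getD_itake (by omega)]
    exact hagree k hk
  have hmism' : (itake X LX).getD i 0 < (itake Y LY).getD i 0 := by
    rw [getD_itake hiLX, getD_itake hiLY]
    exact hmism
  refine ⟨mism_lt (by simpa using hiLX) (by simpa using hiLY) hagree' hmism', ?_, ?_, ?_⟩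
  · intro h
    have := congrArg (fun l => l.getD i 0) h
    omega
  · intro h
    have := getD_prefix h (k := i) (by simpa using hiLX)
    omega
  · intro h
    have := getD_prefix h (k := i) (by simpa using hiLY)
    omega

/-- Properties of the `pow` map on `Roots`. -/
theorem statement_18
    (σ n τ : ℕ) (T : List ℕ)
    (hσ : 2 ≤ σ) (hn : 2 ≤ n) (hτ : 1 ≤ τ)
    (hlen : T.length = n) (halph : ∀ c ∈ T, c < σ)
    (hlast : idx T n = 0) (huniq : ∀ i, 1 ≤ i → i < n → idx T i ≠ 0)
    (Roots : Set (List ℕ)) (hRoots : Roots = {H | ∃ j ∈ R T τ, Lroot T τ j = H}) :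
    (∀ X ∈ Roots, ∀ Y ∈ Roots, X < Y → powS τ X < powS τ Y) ∧
    (∀ X ∈ Roots, ∀ Y ∈ Roots, X ≠ Y →
      powS τ X ≠ powS τ Y ∧ ¬ powS τ X <+: powS τ Y) := by
  constructor
  · intro X hX Y hY hlt
    rw [hRoots] at hX hY
    simp only [Set.mem_setOf_eq] at hX hY
    exact (roots_main hτ hX hY hlt).1
  · intro X hX Y hY hne
    rw [hRoots] at hX hY
    simp only [Set.mem_setOf_eq] at hX hY
    rcases lt_or_gt_of_ne hne with h | h
    · obtain ⟨_, h2, h3, _⟩ := roots_main hτ hX hY h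
      exact ⟨h2, h3⟩
    · obtain ⟨_, h2, _, h4⟩ := roots_main hτ hY hX h
      exact ⟨fun e => h2 e.symm, h4⟩
end CSA
end
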